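/- arXiv:1204.2693 — 3 statements merged into one kernel-verified Lean document; each statement's English description precedes it below -/
import Mathlib

section
/- (Patchwork Theorem) Let φ : P → Q be an order-preserving map of posets, and assume that for every q ∈ Q an acyclic matching M_q on the subposet φ⁻¹(q) is given. Then the union of the matchings M_q over all q ∈ Q is an acyclic matching on P. -/
section Matchings

variable {P : Type*} [PartialOrder P]

/-- `b` covers `a` within the subposet on the subset `S`. -/
def CovByWithin (S : Set P) (a b : P) : Prop :=
  a ∈ S ∧ b ∈ S ∧ a < b ∧ ∀ c ∈ S, a < c → ¬c < b

/-- A partial matching on the subposet of `P` induced on `S`, regarded as a set of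
pairs of elements of `P`: every pair is a covering pair within `S`, and every element
occurs in at most one pair. -/
def IsMatchingOn (S : Set P) (M : Set (P × P)) : Prop :=
  (∀ p ∈ M, CovByWithin S p.1 p.2) ∧
    ∀ p ∈ M, ∀ q ∈ M, (p.1 = q.1 ∨ p.1 = q.2 ∨ p.2 = q.1 ∨ p.2 = q.2) → p = q

/-- A partial matching on the subposet induced on `S` is acyclic if there is no cycle
`a₁ ⋖ b₁ ⋗ a₂ ⋖ b₂ ⋗ ⋯ ⋗ a_k ⋖ b_k ⋗ a₁` with `k ≥ 2`, all `aᵢ` distinct and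
`(aᵢ, bᵢ) ∈ M` (indices mod `k`, covering relations within `S`). -/
def IsAcyclicMatchingOn (S : Set P) (M : Set (P × P)) : Prop :=
  IsMatchingOn S M ∧
    ¬∃ (k : ℕ) (a b : ZMod k → P), 2 ≤ k ∧ Function.Injective a ∧
      ∀ i : ZMod k, (a i, b i) ∈ M ∧ CovByWithin S (a (i + 1)) (b i)

/-- The critical elements of a matching `M` on the subposet induced on `S`: the elements
of `S` occurring in no pair of `M`. -/
def criticalSet (S : Set P) (M : Set (P × P)) : Set P :=
  {x ∈ S | ∀ p ∈ M, p.1 ≠ x ∧ p.2 ≠ x}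

end Matchings

/-- **Patchwork Theorem.** Let `φ : P → Q` be an order-preserving map of posets and assume
that for every `q ∈ Q` an acyclic matching `M q` on the subposet `φ⁻¹(q)` is given
(regarded as a set of pairs of elements of `P`). Then the union of the matchings `M q`
over all `q ∈ Q` is an acyclic matching on `P`. -/
theorem patchwork {P Q : Type*} [PartialOrder P] [PartialOrder Q]
    (φ : P → Q) (hφ : Monotone φ) (M : Q → Set (P × P))
    (hM : ∀ q : Q, IsAcyclicMatchingOn (φ ⁻¹' {q}) (M q)) :
    IsAcyclicMatchingOn Set.univ (⋃ q : Q, M q) := by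

  -- For each pair in `M q`, both components lie in the fiber of `q`.
  have hmem : ∀ q, ∀ p ∈ M q, φ p.1 = q ∧ φ p.2 = q := by
    intro q p hp
    obtain ⟨h1, h2, -, -⟩ := (hM q).1.1 p hp
    exact ⟨h1, h2⟩
  constructor
  · constructor
    · rintro p hp
      obtain ⟨q, hpq⟩ := Set.mem_iUnion.mp hp
      obtain ⟨h1, h2, h3, h4⟩ := (hM q).1.1 p hpq
      refine ⟨trivial, trivial, h3, fun c _ hac hcb => ?_⟩
      have hcq : φ c = q := by
        have h5 : φ p.1 ≤ φ c := hφ hac.le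
        have h6 : φ c ≤ φ p.2 := hφ hcb.le
        rw [(hmem q p hpq).1] at h5
        rw [(hmem q p hpq).2] at h6
        exact le_antisymm h6 h5
      exact h4 c hcq hac hcb
    · rintro p hp p' hp' hshare
      obtain ⟨q, hpq⟩ := Set.mem_iUnion.mp hp
      obtain ⟨q', hpq'⟩ := Set.mem_iUnion.mp hp'
      have hqq : q = q' := by
        obtain ⟨e1, e2⟩ := hmem q p hpq
        obtain ⟨f1, f2⟩ := hmem q' p' hpq'
        rcases hshare with h | h | h | h
        · rw [← e1, h, f1]
        · rw [← e1, h, f2]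
        · rw [← e2, h, f1]
        · rw [← e2, h, f2]
      subst hqq
      exact (hM q).1.2 p hpq p' hpq' hshare
  · rintro ⟨k, a, b, hk, hinj, hcyc⟩
    haveI : NeZero k := ⟨by omega⟩
    choose q hq using fun i => Set.mem_iUnion.mp (hcyc i).1
    have ha : ∀ i, φ (a i) = q i := fun i => (hmem (q i) _ (hq i)).1
    have hb : ∀ i, φ (b i) = q i := fun i => (hmem (q i) _ (hq i)).2
    have hstep : ∀ i, q (i + 1) ≤ q i := by
      intro i
      have := (hcyc i).2.2.2.1.le
      calc q (i + 1) = φ (a (i + 1)) := (ha _).symm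
        _ ≤ φ (b i) := hφ this
        _ = q i := hb i
    have hchain : ∀ m n : ℕ, m ≤ n → q (n : ZMod k) ≤ q (m : ZMod k) := by
      intro m n hmn
      induction n with
      | zero => simp_all
      | succ n ih =>
        rcases Nat.lt_or_ge m (n + 1) with h | h
        · have : ((n + 1 : ℕ) : ZMod k) = (n : ZMod k) + 1 := by push_cast; ring
          rw [this]
          exact le_trans (hstep _) (ih (by omega))
        · have : m = n + 1 := by omega
          subst this; exact le_rfl
    have hconst : ∀ i, q i = q 0 := by
      intro i
      have hival : ((i.val : ℕ) : ZMod k) = i := ZMod.natCast_rightInverse i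
      have h1 : q i ≤ q 0 := by
        have := hchain 0 i.val (Nat.zero_le _)
        rwa [hival, Nat.cast_zero] at this
      have h2 : q 0 ≤ q i := by
        have := hchain i.val k (ZMod.val_lt i).le
        rwa [hival, ZMod.natCast_self] at this
      exact le_antisymm h1 h2
    refine (hM (q 0)).2 ⟨k, a, b, hk, hinj, fun i => ⟨hconst i ▸ hq i, ?_⟩⟩
    obtain ⟨-, -, hlt, hcov⟩ := (hcyc i).2
    refine ⟨?_, ?_, hlt, fun c _ hac hcb => hcov c trivial hac hcb⟩
    · simp only [Set.mem_preimage, Set.mem_singleton_iff]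
      rw [ha, hconst]
    · simp only [Set.mem_preimage, Set.mem_singleton_iff]
      rw [hb, hconst]
end

section
/- (Equivariant Patchwork Theorem, existence part) Let a group G act by order isomorphisms on posets P and Q, let φ : P → Q be an order-preserving G-equivariant map, and let R ⊆ Q be a set containing exactly one representative of each G-orbit of Q. Assume that for each r ∈ R a G_r-equivariant acyclic matching M_r on φ⁻¹(r) is given, where G_r = {g ∈ G | g·r = r} is the stabilizer of r, and let C_r denote the set of critical elements of M_r. Then there exists a G-equivariant acyclic matching on P whose set of critical elements is ⋃_{g ∈ G, r ∈ R} g·C_r. -/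
lemma zmod_cycle_const {k : ℕ} (hk : 2 ≤ k) {Q : Type*} [PartialOrder Q]
    (f : ZMod k → Q) (hf : ∀ i, f (i + 1) ≤ f i) (i : ZMod k) : f i = f 0 := by
  haveI : NeZero k := ⟨by omega⟩
  have step : ∀ (n : ℕ) (j : ZMod k), f (j + (n : ZMod k)) ≤ f j := by
    intro n
    induction n with
    | zero => intro j; simp
    | succ m ih =>
      intro j
      have he : f (j + ((m + 1 : ℕ) : ZMod k)) = f ((j + (m : ZMod k)) + 1) := by
        push_cast; ring_nf
      rw [he]
      exact le_trans (hf _) (ih j)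
  have h1 : f i ≤ f 0 := by
    have := step i.val 0
    rwa [zero_add, ZMod.natCast_val, ZMod.cast_id] at this
  have h2 : f 0 ≤ f i := by
    have hv : i + ((k - i.val : ℕ) : ZMod k) = 0 := by
      have hle : i.val ≤ k := (ZMod.val_lt i).le
      rw [Nat.cast_sub hle, ZMod.natCast_self, ZMod.natCast_val, ZMod.cast_id]
      ring
    have := step (k - i.val) i
    rwa [hv] at this
  exact le_antisymm h1 h2

lemma smul_lt_smul_iff_of_monotone {G P : Type*} [Group G] [PartialOrder P] [MulAction G P]
    (hP : ∀ g : G, Monotone (fun x : P => g • x)) (g : G) {x y : P} :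
    g • x < g • y ↔ x < y := by
  have key : ∀ (h : G) {a b : P}, a < b → h • a < h • b := fun h a b hab =>
    lt_of_le_of_ne ((hP h) hab.le) fun e => hab.ne (MulAction.injective h e)
  constructor
  · intro h
    have := key g⁻¹ h
    simpa using this
  · exact key g

/-- **Equivariant Patchwork Theorem (existence part).** Let a group `G` act by order
isomorphisms on posets `P` and `Q`, let `φ : P → Q` be an order-preserving `G`-equivariant
map, and let `R ⊆ Q` contain exactly one representative of each `G`-orbit of `Q`. Assume
that for each `r ∈ R` a `G_r`-equivariant acyclic matching `M r` on `φ⁻¹(r)` is given,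
where `G_r` is the stabilizer of `r`. Then there is a `G`-equivariant acyclic matching on
`P` whose set of critical elements is `⋃_{g ∈ G, r ∈ R} g • C_r`, where `C_r` is the set
of critical elements of `M r`. -/
theorem equivariant_patchwork_exists {G P Q : Type*} [Group G]
    [PartialOrder P] [PartialOrder Q] [MulAction G P] [MulAction G Q]
    (hP : ∀ g : G, Monotone (fun x : P => g • x))
    (hQ : ∀ g : G, Monotone (fun q : Q => g • q))
    (φ : P → Q) (hφ : Monotone φ) (hφG : ∀ (g : G) (x : P), φ (g • x) = g • φ x)
    (R : Set Q) (hR : ∀ q : Q, ∃! r, r ∈ R ∧ r ∈ MulAction.orbit G q)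
    (M : Q → Set (P × P))
    (hM : ∀ r ∈ R, IsAcyclicMatchingOn (φ ⁻¹' {r}) (M r))
    (hMeq : ∀ r ∈ R, ∀ g ∈ MulAction.stabilizer G r, ∀ p ∈ M r,
      (g • p.1, g • p.2) ∈ M r) :
    ∃ M' : Set (P × P),
      IsAcyclicMatchingOn Set.univ M' ∧
      (∀ (g : G), ∀ p ∈ M', (g • p.1, g • p.2) ∈ M') ∧
      criticalSet Set.univ M' =
        ⋃ (g : G), ⋃ (r : Q), ⋃ (_ : r ∈ R),
          (fun x => g • x) '' criticalSet (φ ⁻¹' {r}) (M r) := by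
  
  classical
  have hltP := smul_lt_smul_iff_of_monotone hP
  -- matched pairs lie in the fiber
  have hfib : ∀ r ∈ R, ∀ a b : P, (a, b) ∈ M r → φ a = r ∧ φ b = r := by
    intro r hr a b hab
    obtain ⟨h1, h2, -, -⟩ := (hM r hr).1.1 (a, b) hab
    exact ⟨h1, h2⟩
  -- uniqueness of orbit representatives
  have huniq : ∀ r ∈ R, ∀ s ∈ R, (∃ g : G, g • r = s) → r = s := by
    rintro r hr s hs ⟨g, hg⟩
    obtain ⟨t, -, ht⟩ := hR r
    have h1 : r = t := ht r ⟨hr, MulAction.mem_orbit_self r⟩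
    have h2 : s = t := ht s ⟨hs, ⟨g, hg⟩⟩
    rw [h1, h2]
  -- covering within a fiber lifts to covering in P
  have hcovU : ∀ (r : Q) (a b : P), CovByWithin (φ ⁻¹' {r}) a b →
      CovByWithin Set.univ a b := by
    rintro r a b ⟨ha, hb, hab, hmax⟩
    have ha' : φ a = r := ha
    have hb' : φ b = r := hb
    refine ⟨trivial, trivial, hab, ?_⟩
    intro c _ hac hcb
    have hc : φ c = r := le_antisymm (by rw [← hb']; exact hφ hcb.le)
      (by rw [← ha']; exact hφ hac.le)
    exact hmax c hc hac hcb
  -- the action preserves covering in P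
  have hcovS : ∀ (g : G) (a b : P), CovByWithin Set.univ a b →
      CovByWithin Set.univ (g • a) (g • b) := by
    rintro g a b ⟨-, -, hab, hmax⟩
    refine ⟨trivial, trivial, (hltP g).2 hab, ?_⟩
    intro c _ h1 h2
    refine hmax (g⁻¹ • c) trivial ?_ ?_
    · have := (hltP g⁻¹).2 h1; simpa using this
    · have := (hltP g⁻¹).2 h2; simpa using this
  -- key transfer lemma: two translated pairs sharing an element are equal
  have key : ∀ r ∈ R, ∀ s ∈ R, ∀ (g h : G) (a b c d : P),
      (a, b) ∈ M r → (c, d) ∈ M s →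
      (g • a = h • c ∨ g • a = h • d ∨ g • b = h • c ∨ g • b = h • d) →
      g • a = h • c ∧ g • b = h • d := by
    intro r hr s hs g h a b c d hab hcd hsh
    obtain ⟨hfa, hfb⟩ := hfib r hr a b hab
    obtain ⟨hfc, hfd⟩ := hfib s hs c d hcd
    have hrs : g • r = h • s := by
      rcases hsh with e | e | e | e <;>
      · have := congrArg φ e
        rw [hφG, hφG] at this
        simp only [hfa, hfb, hfc, hfd] at this
        exact this
    have hrs' : r = s := huniq r hr s hs ⟨h⁻¹ * g, by rw [mul_smul, hrs, inv_smul_smul]⟩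
    subst hrs'
    have hk : (h⁻¹ * g) ∈ MulAction.stabilizer G r := by
      rw [MulAction.mem_stabilizer_iff, mul_smul, hrs, inv_smul_smul]
    have hpair : ((h⁻¹ * g) • a, (h⁻¹ * g) • b) ∈ M r := hMeq r hr _ hk (a, b) hab
    have hsh' : (h⁻¹ * g) • a = c ∨ (h⁻¹ * g) • a = d ∨
        (h⁻¹ * g) • b = c ∨ (h⁻¹ * g) • b = d := by
      rcases hsh with e | e | e | e
      · exact Or.inl (by rw [mul_smul, e, inv_smul_smul])
      · exact Or.inr (Or.inl (by rw [mul_smul, e, inv_smul_smul]))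
      · exact Or.inr (Or.inr (Or.inl (by rw [mul_smul, e, inv_smul_smul])))
      · exact Or.inr (Or.inr (Or.inr (by rw [mul_smul, e, inv_smul_smul])))
    have heq := (hM r hr).1.2 _ hpair (c, d) hcd hsh'
    have h1 : (h⁻¹ * g) • a = c := by have := congrArg Prod.fst heq; simpa using this
    have h2 : (h⁻¹ * g) • b = d := by have := congrArg Prod.snd heq; simpa using this
    constructor
    · rw [← h1, smul_smul, mul_inv_cancel_left]
    · rw [← h2, smul_smul, mul_inv_cancel_left]
  -- transfer of criticality
  have crit_transfer : ∀ r ∈ R, ∀ c : P, φ c = r → (∀ p ∈ M r, p.1 ≠ c ∧ p.2 ≠ c) →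
      ∀ s ∈ R, ∀ (g h : G) (u v : P), (u, v) ∈ M s →
      h • u ≠ g • c ∧ h • v ≠ g • c := by
    intro r hr c hc hcrit s hs g h u v huv
    obtain ⟨hfu, hfv⟩ := hfib s hs u v huv
    constructor
    · intro e
      have hrs : h • s = g • r := by
        have := congrArg φ e; rwa [hφG, hφG, hfu, hc] at this
      have hsr : s = r := huniq s hs r hr ⟨g⁻¹ * h, by rw [mul_smul, hrs, inv_smul_smul]⟩
      subst hsr
      have hk : (g⁻¹ * h) ∈ MulAction.stabilizer G s := by
        rw [MulAction.mem_stabilizer_iff, mul_smul, hrs, inv_smul_smul]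
      have hmem := hMeq s hs _ hk (u, v) huv
      have hcu : (g⁻¹ * h) • u = c := by rw [mul_smul, e, inv_smul_smul]
      exact (hcrit _ hmem).1 hcu
    · intro e
      have hrs : h • s = g • r := by
        have := congrArg φ e; rwa [hφG, hφG, hfv, hc] at this
      have hsr : s = r := huniq s hs r hr ⟨g⁻¹ * h, by rw [mul_smul, hrs, inv_smul_smul]⟩
      subst hsr
      have hk : (g⁻¹ * h) ∈ MulAction.stabilizer G s := by
        rw [MulAction.mem_stabilizer_iff, mul_smul, hrs, inv_smul_smul]
      have hmem := hMeq s hs _ hk (u, v) huv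
      have hcv : (g⁻¹ * h) • v = c := by rw [mul_smul, e, inv_smul_smul]
      exact (hcrit _ hmem).2 hcv
  refine ⟨{p : P × P | ∃ (g : G) (r : Q) (a b : P),
      r ∈ R ∧ (a, b) ∈ M r ∧ p = (g • a, g • b)}, ⟨⟨?_, ?_⟩, ?_⟩, ?_, ?_⟩
  · -- every pair of M' covers in P
    rintro p ⟨g, r, a, b, hr, hab, rfl⟩
    exact hcovS g a b (hcovU r a b ((hM r hr).1.1 (a, b) hab))
  · -- matching condition
    rintro p ⟨g, r, a, b, hr, hab, rfl⟩ q ⟨h, s, c, d, hs, hcd, rfl⟩ hsh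
    obtain ⟨h1, h2⟩ := key r hr s hs g h a b c d hab hcd hsh
    exact Prod.ext h1 h2
  · -- acyclicity
    rintro ⟨k, a, b, hk2, hainj, hcyc⟩
    have hdec : ∀ i : ZMod k, ∃ (g : G) (r : Q) (x y : P),
        r ∈ R ∧ (x, y) ∈ M r ∧ (a i, b i) = (g • x, g • y) := fun i => (hcyc i).1
    choose g r x y hrR hxy hab using hdec
    have ha : ∀ i, a i = g i • x i := fun i => congrArg Prod.fst (hab i)
    have hb : ∀ i, b i = g i • y i := fun i => congrArg Prod.snd (hab i)
    have hfa : ∀ i, φ (a i) = g i • r i := by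
      intro i; rw [ha i, hφG, (hfib _ (hrR i) _ _ (hxy i)).1]
    have hfb : ∀ i, φ (b i) = g i • r i := by
      intro i; rw [hb i, hφG, (hfib _ (hrR i) _ _ (hxy i)).2]
    have hmono : ∀ i : ZMod k,
        (fun j => g j • r j) (i + 1) ≤ (fun j => g j • r j) i := by
      intro i
      have hlt : a (i + 1) < b i := ((hcyc i).2).2.2.1
      have := hφ hlt.le
      rwa [hfa, hfb] at this
    have hconst : ∀ i : ZMod k, g i • r i = g 0 • r 0 :=
      fun i => zmod_cycle_const hk2 (fun j => g j • r j) hmono i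
    have hri : ∀ i, r i = r 0 := fun i => huniq _ (hrR i) _ (hrR 0)
      ⟨(g 0)⁻¹ * g i, by rw [mul_smul, hconst i, inv_smul_smul]⟩
    have hg0 : ∀ i, g i • r 0 = g 0 • r 0 := by
      intro i
      have := hconst i
      rwa [hri i] at this
    have hstab : ∀ i, ((g 0)⁻¹ * g i) ∈ MulAction.stabilizer G (r 0) := by
      intro i
      rw [MulAction.mem_stabilizer_iff, mul_smul, hg0 i, inv_smul_smul]
    have hmem : ∀ i, ((g 0)⁻¹ • a i, (g 0)⁻¹ • b i) ∈ M (r 0) := by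
      intro i
      have h1 : (x i, y i) ∈ M (r 0) := by rw [← hri i]; exact hxy i
      have := hMeq (r 0) (hrR 0) _ (hstab i) (x i, y i) h1
      simpa [ha i, hb i, mul_smul] using this
    refine (hM (r 0) (hrR 0)).2
      ⟨k, fun i => (g 0)⁻¹ • a i, fun i => (g 0)⁻¹ • b i, hk2, ?_, ?_⟩
    · intro i j hij
      exact hainj (MulAction.injective (g 0)⁻¹ hij)
    · intro i
      refine ⟨hmem i, ?_⟩
      obtain ⟨-, -, hlt, hmax⟩ :=
        hcovS (g 0)⁻¹ _ _ ((hcyc i).2)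
      have hmem1 : φ ((g 0)⁻¹ • a (i + 1)) = r 0 := (hfib _ (hrR 0) _ _ (hmem (i + 1))).1
      have hmem2 : φ ((g 0)⁻¹ • b i) = r 0 := (hfib _ (hrR 0) _ _ (hmem i)).2
      exact ⟨hmem1, hmem2, hlt, fun c hc h1 h2 => hmax c trivial h1 h2⟩
  · -- equivariance
    rintro g0 p ⟨g, r, a, b, hr, hab, rfl⟩
    exact ⟨g0 * g, r, a, b, hr, hab, by simp [mul_smul]⟩
  · -- critical set
    ext z
    simp only [criticalSet, Set.mem_setOf_eq, Set.mem_iUnion, Set.mem_image,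
      Set.mem_univ, true_and, Set.mem_preimage, Set.mem_singleton_iff]
    constructor
    · intro hcrit
      obtain ⟨r, ⟨hrR', hro⟩, -⟩ := hR (φ z)
      obtain ⟨g, hg⟩ := MulAction.mem_orbit_iff.mp hro
      refine ⟨g⁻¹, r, hrR', g • z, ⟨⟨by rw [hφG]; exact hg, ?_⟩, by simp⟩⟩
      rintro p hp
      have hmem : (g⁻¹ • p.1, g⁻¹ • p.2) ∈
          {p : P × P | ∃ (g : G) (r : Q) (a b : P),
            r ∈ R ∧ (a, b) ∈ M r ∧ p = (g • a, g • b)} :=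
        ⟨g⁻¹, r, p.1, p.2, hrR', by simpa using hp, rfl⟩
      have hz := hcrit _ hmem
      constructor
      · intro e
        exact hz.1 (by rw [e, inv_smul_smul])
      · intro e
        exact hz.2 (by rw [e, inv_smul_smul])
    · rintro ⟨g, r, hrR', c, ⟨⟨hcfib, hccrit⟩, rfl⟩⟩
      rintro p ⟨h, s, u, v, hs, huv, rfl⟩
      exact crit_transfer r hrR' c hcfib hccrit s hs g h u v huv
end

section
/- For every n ≥ 3, the cardinality of C_n is (n−1)!, where C_n is the set of chains of cardinality n−2 in Π̄_n all of whose members are partitions in which every block not containing 1 is a singleton. -/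
/-- The poset `Π̄_n`: set partitions of `Fin n` (modeled as setoids, ordered by refinement,
with the finer partition smaller), with the minimum `⊥` and maximum `⊤` removed. -/
def BarPi (n : ℕ) : Type :=
  {s : Setoid (Fin n) // s ≠ ⊥ ∧ s ≠ ⊤}

instance (n : ℕ) : PartialOrder (BarPi n) :=
  inferInstanceAs (PartialOrder {s : Setoid (Fin n) // s ≠ ⊥ ∧ s ≠ ⊤})

/-- The natural (relabeling) action of the symmetric group on setoids of `Fin n`. -/
instance permSetoidAction (n : ℕ) : MulAction (Equiv.Perm (Fin n)) (Setoid (Fin n)) where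
  smul g s := Setoid.comap (⇑g⁻¹) s
  one_smul s := Setoid.ext fun x y => by first | simp [Setoid.comap_rel] | exact Iff.rfl
  mul_smul g h s := Setoid.ext fun x y => by first | simp [Setoid.comap_rel, Equiv.Perm.mul_apply] | exact Iff.rfl

theorem perm_smul_setoid_rel (n : ℕ) (g : Equiv.Perm (Fin n)) (s : Setoid (Fin n))
    (x y : Fin n) : (g • s) x y ↔ s (g⁻¹ x) (g⁻¹ y) := Iff.rfl

theorem perm_smul_bot (n : ℕ) (g : Equiv.Perm (Fin n)) :
    g • (⊥ : Setoid (Fin n)) = ⊥ := by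
  apply Setoid.ext
  intro x y
  rw [perm_smul_setoid_rel]
  constructor
  · intro h
    have : (⊥ : Setoid (Fin n)) (g⁻¹ x) (g⁻¹ y) := h
    rw [show ⇑(⊥ : Setoid (Fin n)) = (· = ·) from Setoid.bot_def] at this
    have := congrArg g this
    simpa using this
  · intro h
    have : x = y := by rwa [show ⇑(⊥ : Setoid (Fin n)) = (· = ·) from Setoid.bot_def] at h
    subst this
    exact (⊥ : Setoid (Fin n)).iseqv.refl _

theorem perm_smul_top (n : ℕ) (g : Equiv.Perm (Fin n)) :
    g • (⊤ : Setoid (Fin n)) = ⊤ := by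
  apply Setoid.ext
  intro x y
  rw [perm_smul_setoid_rel]

theorem perm_smul_mono (n : ℕ) (g : Equiv.Perm (Fin n)) :
    Monotone (fun s : Setoid (Fin n) => g • s) := by
  intro s t h
  intro x y hxy
  exact Setoid.le_def.mp h hxy

/-- The relabeling action of the symmetric group on `Π̄_n`. -/
instance permBarPiAction (n : ℕ) : MulAction (Equiv.Perm (Fin n)) (BarPi n) where
  smul g s := ⟨g • s.1, by
      constructor
      · intro h
        apply s.2.1
        have := congrArg (fun t => g⁻¹ • t) h
        simpa [perm_smul_bot] using this
      · intro h
        apply s.2.2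
        have := congrArg (fun t => g⁻¹ • t) h
        simpa [perm_smul_top] using this⟩
  one_smul s := Subtype.ext (one_smul _ _)
  mul_smul g h s := Subtype.ext (mul_smul g h s.1)

theorem perm_smul_barPi_mono (n : ℕ) (g : Equiv.Perm (Fin n)) :
    Monotone (fun s : BarPi n => g • s) := by
  intro s t h
  exact perm_smul_mono n g h

/-- The subgroup `S_1 × S_{n-1}` of permutations fixing the distinguished element `0`
(playing the role of `1 ∈ [n]`). -/
def S1Sn (n : ℕ) [NeZero n] : Subgroup (Equiv.Perm (Fin n)) :=
  MulAction.stabilizer (Equiv.Perm (Fin n)) (0 : Fin n)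

/-- The set of partitions in `Π̄_n` in which every block not containing the distinguished
element `0` is a singleton. -/
def blockSet (n : ℕ) [NeZero n] : Set (BarPi n) :=
  {s | ∀ x y : Fin n, s.1 x y → s.1 x 0 ∨ x = y}

/-- The face poset of the nerve of `Π̄_n`: nonempty finite chains in `Π̄_n`, ordered
by inclusion. -/
def FacePoset (n : ℕ) : Type :=
  {c : Finset (BarPi n) // c.Nonempty ∧ IsChain (· ≤ ·) (↑c : Set (BarPi n))}

instance (n : ℕ) : PartialOrder (FacePoset n) where
  le c d := c.1 ⊆ d.1
  le_refl c := subset_rfl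
  le_trans a b c hab hbc := Finset.Subset.trans hab hbc
  le_antisymm a b hab hba := Subtype.ext (Finset.Subset.antisymm hab hba)

noncomputable instance (n : ℕ) : DecidableEq (BarPi n) := Classical.decEq _

/-- The relabeling action of the symmetric group on the face poset. -/
noncomputable instance permFaceAction (n : ℕ) : MulAction (Equiv.Perm (Fin n)) (FacePoset n) where
  smul g c := ⟨c.1.image (fun s => g • s), by
    constructor
    · exact c.2.1.image _
    · intro x hx y hy hxy
      simp only [Finset.coe_image, Set.mem_image, Finset.mem_coe] at hx hy
      obtain ⟨x', hx', rfl⟩ := hx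
      obtain ⟨y', hy', rfl⟩ := hy
      have hxy' : x' ≠ y' := fun h => hxy (by rw [h])
      rcases c.2.2 hx' hy' hxy' with h | h
      · exact Or.inl (perm_smul_barPi_mono n g h)
      · exact Or.inr (perm_smul_barPi_mono n g h)⟩
  one_smul c := by
    apply Subtype.ext
    show c.1.image (fun s => (1 : Equiv.Perm (Fin n)) • s) = c.1
    rw [show (fun s : BarPi n => (1 : Equiv.Perm (Fin n)) • s) = id from funext fun s => one_smul _ s]
    exact Finset.image_id
  mul_smul g h c := by
    apply Subtype.ext
    show c.1.image (fun s => (g * h) • s) = (c.1.image (fun s => h • s)).image (fun s => g • s)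
    rw [Finset.image_image, show ((fun s : BarPi n => g • s) ∘ (fun s => h • s)) = (fun s => (g * h) • s) from funext fun s => (mul_smul g h s).symm]

/-- `C_n`: the chains of cardinality `n - 2` in `Π̄_n` all of whose members lie in
`blockSet n`, i.e. are partitions in which every block not containing `0` is a singleton. -/
def Cn (n : ℕ) [NeZero n] : Set (FacePoset n) :=
  {c | (↑c.1 : Set (BarPi n)) ⊆ blockSet n ∧ c.1.card = n - 2}

/-- The partition `{{1}, {2, …, n}}` of `[n]`, i.e. `{{0}, {1, …, n-1}}` of `Fin n`,
as a setoid. -/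
def alphaSetoid (n : ℕ) [NeZero n] : Setoid (Fin n) :=
  ⟨fun x y => x = y ∨ (x ≠ 0 ∧ y ≠ 0), by
    constructor
    · intro x; exact Or.inl rfl
    · rintro x y (rfl | ⟨hx, hy⟩)
      · exact Or.inl rfl
      · exact Or.inr ⟨hy, hx⟩
    · rintro x y z (rfl | ⟨hx, hy⟩) (rfl | ⟨hy', hz⟩)
      · exact Or.inl rfl
      · exact Or.inr ⟨hy', hz⟩
      · exact Or.inr ⟨hx, hy⟩
      · exact Or.inr ⟨hx, hz⟩⟩

/-- The partition `{{1}, {2, …, n}}` as an element of `Π̄_n` (requires `n ≥ 3`). -/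
def alphaBar (n : ℕ) [NeZero n] (hn : 3 ≤ n) : BarPi n :=
  ⟨alphaSetoid n, by
    constructor
    · intro h
      have h12 : alphaSetoid n ⟨1, by omega⟩ ⟨2, by omega⟩ :=
        Or.inr ⟨by simp [Fin.ext_iff], by simp [Fin.ext_iff]⟩
      rw [h] at h12
      have : (⟨1, by omega⟩ : Fin n) = ⟨2, by omega⟩ := h12
      simp [Fin.ext_iff] at this
    · intro h
      have h01 : (⊤ : Setoid (Fin n)) 0 ⟨1, by omega⟩ := trivial
      rw [← h] at h01
      rcases h01 with h01 | ⟨h0, _⟩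
      · have : (0 : Fin n) = ⟨1, by omega⟩ := h01
        simp [Fin.ext_iff] at this
      · exact h0 rfl⟩

/-- The one-element chain `α_n = {{{1},{2,…,n}}}` in the face poset. -/
def alphaChain (n : ℕ) [NeZero n] (hn : 3 ≤ n) : FacePoset n :=
  ⟨{alphaBar n hn}, Finset.singleton_nonempty _, by
    simp only [Finset.coe_singleton]
    exact Set.Subsingleton.isChain (Set.subsingleton_singleton)⟩

section CardCnAux

open Finset

variable {n : ℕ} [NeZero n]

/-- The block of `0` in a partition. -/
noncomputable def blockOf (s : BarPi n) : Finset (Fin n) :=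
  (Set.toFinite {x : Fin n | s.1 x 0}).toFinset

theorem mem_blockOf {s : BarPi n} {x : Fin n} : x ∈ blockOf s ↔ s.1 x 0 :=
  (Set.toFinite _).mem_toFinset

theorem zero_mem_blockOf (s : BarPi n) : (0 : Fin n) ∈ blockOf s :=
  mem_blockOf.2 (s.1.refl 0)

theorem rel_iff_blockOf {s : BarPi n} (hs : s ∈ blockSet n) {x y : Fin n} :
    s.1 x y ↔ x = y ∨ (x ∈ blockOf s ∧ y ∈ blockOf s) := by
  constructor
  · intro h
    rcases hs x y h with h0 | rfl
    · exact Or.inr ⟨mem_blockOf.2 h0, mem_blockOf.2 (s.1.trans (s.1.symm h) h0)⟩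
    · exact Or.inl rfl
  · rintro (rfl | ⟨hx, hy⟩)
    · exact s.1.refl x
    · exact s.1.trans (mem_blockOf.1 hx) (s.1.symm (mem_blockOf.1 hy))

theorem le_iff_blockOf {s t : BarPi n} (hs : s ∈ blockSet n) (ht : t ∈ blockSet n) :
    s ≤ t ↔ blockOf s ⊆ blockOf t := by
  constructor
  · intro h x hx
    exact mem_blockOf.2 (Setoid.le_def.mp h (mem_blockOf.1 hx))
  · intro h
    show s.1 ≤ t.1
    rw [Setoid.le_def]
    intro x y hxy
    rcases (rel_iff_blockOf hs).1 hxy with rfl | ⟨hx, hy⟩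
    · exact t.1.refl x
    · exact (rel_iff_blockOf ht).2 (Or.inr ⟨h hx, h hy⟩)

theorem blockOf_injOn {s t : BarPi n} (hs : s ∈ blockSet n) (ht : t ∈ blockSet n)
    (h : blockOf s = blockOf t) : s = t :=
  le_antisymm ((le_iff_blockOf hs ht).2 (h ▸ Finset.Subset.refl _))
    ((le_iff_blockOf ht hs).2 (h ▸ Finset.Subset.refl _))

theorem two_le_card_blockOf {s : BarPi n} (hs : s ∈ blockSet n) : 2 ≤ (blockOf s).card := by
  obtain ⟨x, y, hxy, hne⟩ : ∃ x y : Fin n, s.1 x y ∧ x ≠ y := by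
    by_contra h
    push_neg at h
    apply s.2.1
    apply Setoid.ext
    intro a b
    rw [show ⇑(⊥ : Setoid (Fin n)) = (· = ·) from Setoid.bot_def]
    exact ⟨fun hab => h a b hab, fun hab => hab ▸ s.1.refl a⟩
  have hx0 : s.1 x 0 := (hs x y hxy).resolve_right hne
  have hy0 : s.1 y 0 := (hs y x (s.1.symm hxy)).resolve_right (Ne.symm hne)
  rw [show (2 : ℕ) = 1 + 1 from rfl]
  apply Nat.succ_le_of_lt
  rw [Finset.one_lt_card]
  rcases eq_or_ne x 0 with rfl | hx
  · exact ⟨y, mem_blockOf.2 hy0, 0, zero_mem_blockOf s, Ne.symm hne⟩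
  · exact ⟨x, mem_blockOf.2 hx0, 0, zero_mem_blockOf s, hx⟩

theorem card_blockOf_le (s : BarPi n) : (blockOf s).card ≤ n - 1 := by
  have hne : blockOf s ≠ Finset.univ := by
    intro h
    apply s.2.2
    apply Setoid.ext
    intro a b
    have ha : s.1 a 0 := mem_blockOf.1 (h ▸ Finset.mem_univ a)
    have hb : s.1 b 0 := mem_blockOf.1 (h ▸ Finset.mem_univ b)
    exact ⟨fun _ => trivial, fun _ => s.1.trans ha (s.1.symm hb)⟩
  have hlt : (blockOf s).card < n := by
    have := Finset.card_lt_card (Finset.ssubset_univ_iff.2 hne)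
    simpa using this
  omega

/-- The good blocks: containing `0`, of size between `2` and `n-1`. -/
def IsGoodBlock (n : ℕ) [NeZero n] (B : Finset (Fin n)) : Prop :=
  (0 : Fin n) ∈ B ∧ 2 ≤ B.card ∧ B.card ≤ n - 1

theorem isGoodBlock_blockOf {s : BarPi n} (hs : s ∈ blockSet n) :
    IsGoodBlock n (blockOf s) :=
  ⟨zero_mem_blockOf s, two_le_card_blockOf hs, card_blockOf_le s⟩

/-- The setoid whose unique non-singleton block is `B`. -/
def blkSetoid (B : Finset (Fin n)) : Setoid (Fin n) :=
  ⟨fun x y => x = y ∨ (x ∈ B ∧ y ∈ B), by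
    refine ⟨fun x => Or.inl rfl, ?_, ?_⟩
    · rintro x y (rfl | ⟨h1, h2⟩)
      exacts [Or.inl rfl, Or.inr ⟨h2, h1⟩]
    · rintro x y z (rfl | ⟨h1, h2⟩) (rfl | ⟨h3, h4⟩)
      exacts [Or.inl rfl, Or.inr ⟨h3, h4⟩, Or.inr ⟨h1, h2⟩, Or.inr ⟨h1, h4⟩]⟩

theorem blkSetoid_rel {B : Finset (Fin n)} {x y : Fin n} :
    blkSetoid B x y ↔ x = y ∨ (x ∈ B ∧ y ∈ B) := Iff.rfl

/-- The element of `Π̄_n` with unique non-singleton block `B`. -/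
def barOf (B : Finset (Fin n)) (hB : IsGoodBlock n B) : BarPi n :=
  ⟨blkSetoid B, by
    constructor
    · intro h
      obtain ⟨b, hbB, hb0⟩ := Finset.exists_mem_ne
        (by have := hB.2.1; omega : 1 < B.card) 0
      have : blkSetoid B b 0 := Or.inr ⟨hbB, hB.1⟩
      rw [h, show ⇑(⊥ : Setoid (Fin n)) = (· = ·) from Setoid.bot_def] at this
      exact hb0 this
    · intro h
      obtain ⟨c, hc⟩ : ∃ c : Fin n, c ∉ B := by
        by_contra hall
        push_neg at hall
        have hBu : B = Finset.univ := Finset.eq_univ_of_forall hall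
        have hn1 : (1:ℕ) ≤ n := Nat.one_le_iff_ne_zero.2 (NeZero.ne n)
        have hc := hB.2.2
        rw [hBu, Finset.card_univ, Fintype.card_fin] at hc
        omega
      have htop : (⊤ : Setoid (Fin n)) c 0 := trivial
      rw [← h] at htop
      rcases htop with h0 | ⟨hcB, _⟩
      · exact hc (h0 ▸ hB.1)
      · exact hc hcB⟩

theorem barOf_mem_blockSet (B : Finset (Fin n)) (hB : IsGoodBlock n B) :
    barOf B hB ∈ blockSet n := by
  rintro x y (rfl | ⟨hx, hy⟩)
  · exact Or.inr rfl
  · exact Or.inl (Or.inr ⟨hx, hB.1⟩)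

theorem blockOf_barOf (B : Finset (Fin n)) (hB : IsGoodBlock n B) :
    blockOf (barOf B hB) = B := by
  ext x
  rw [mem_blockOf]
  constructor
  · rintro (rfl | ⟨hx, _⟩)
    · exact hB.1
    · exact hx
  · intro hx
    exact Or.inr ⟨hx, hB.1⟩

theorem barOf_blockOf {s : BarPi n} (hs : s ∈ blockSet n) (h : IsGoodBlock n (blockOf s)) :
    barOf (blockOf s) h = s :=
  blockOf_injOn (barOf_mem_blockSet _ _) hs (blockOf_barOf _ _)

theorem barOf_le {B B' : Finset (Fin n)} (hB : IsGoodBlock n B) (hB' : IsGoodBlock n B')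
    (h : B ⊆ B') : barOf B hB ≤ barOf B' hB' := by
  rw [le_iff_blockOf (barOf_mem_blockSet _ _) (barOf_mem_blockSet _ _),
    blockOf_barOf, blockOf_barOf]
  exact h

theorem barOf_congr {B B' : Finset (Fin n)} (hB : IsGoodBlock n B) (hB' : IsGoodBlock n B')
    (h : B = B') : barOf B hB = barOf B' hB' := by
  subst h
  rfl

/-- The flag of blocks associated to an embedding. -/
noncomputable def BsetOf (a : Fin (n-2) ↪ {x : Fin n // x ≠ 0}) (i : Fin (n-2)) :
    Finset (Fin n) :=
  insert 0 ((Finset.Iic i).image (fun j => (a j).1))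

theorem zero_not_mem_image (a : Fin (n-2) ↪ {x : Fin n // x ≠ 0}) (i : Fin (n-2)) :
    (0 : Fin n) ∉ (Finset.Iic i).image (fun j => (a j).1) := by
  intro h
  rw [Finset.mem_image] at h
  obtain ⟨j, _, hj⟩ := h
  exact (a j).2 hj

theorem card_BsetOf (a : Fin (n-2) ↪ {x : Fin n // x ≠ 0}) (i : Fin (n-2)) :
    (BsetOf a i).card = i.1 + 2 := by
  rw [BsetOf, Finset.card_insert_of_notMem (zero_not_mem_image a i),
    Finset.card_image_of_injective _ (fun j k h => a.injective (Subtype.ext h)),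
    Fin.card_Iic]

theorem isGoodBlock_BsetOf (hn : 3 ≤ n) (a : Fin (n-2) ↪ {x : Fin n // x ≠ 0})
    (i : Fin (n-2)) : IsGoodBlock n (BsetOf a i) := by
  refine ⟨Finset.mem_insert_self _ _, ?_, ?_⟩ <;> rw [card_BsetOf]
  · omega
  · have := i.2
    omega

theorem BsetOf_mono (a : Fin (n-2) ↪ {x : Fin n // x ≠ 0}) {i j : Fin (n-2)} (h : i ≤ j) :
    BsetOf a i ⊆ BsetOf a j :=
  Finset.insert_subset_insert _ (Finset.image_subset_image (Finset.Iic_subset_Iic.2 h))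

/-- The chain associated to an embedding. -/
noncomputable def psi (hn : 3 ≤ n) (a : Fin (n-2) ↪ {x : Fin n // x ≠ 0}) : FacePoset n :=
  ⟨Finset.univ.image (fun i => barOf (BsetOf a i) (isGoodBlock_BsetOf hn a i)), by
    have : Nonempty (Fin (n-2)) := ⟨⟨0, by omega⟩⟩
    exact Finset.univ_nonempty.image _, by
    rintro x hx y hy hne
    rw [Finset.coe_image, Set.mem_image] at hx hy
    obtain ⟨i, -, rfl⟩ := hx
    obtain ⟨j, -, rfl⟩ := hy
    rcases le_total i j with h | h
    · exact Or.inl (barOf_le _ _ (BsetOf_mono a h))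
    · exact Or.inr (barOf_le _ _ (BsetOf_mono a h))⟩

theorem psi_fun_injective (hn : 3 ≤ n) (a : Fin (n-2) ↪ {x : Fin n // x ≠ 0}) :
    Function.Injective (fun i => barOf (BsetOf a i) (isGoodBlock_BsetOf hn a i)) := by
  intro i j h
  have hB : BsetOf a i = BsetOf a j := by
    have := congrArg blockOf h
    rwa [blockOf_barOf, blockOf_barOf] at this
  have := congrArg Finset.card hB
  rw [card_BsetOf, card_BsetOf] at this
  exact Fin.ext (by omega)

theorem psi_card (hn : 3 ≤ n) (a : Fin (n-2) ↪ {x : Fin n // x ≠ 0}) :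
    (psi hn a).1.card = n - 2 := by
  show (Finset.univ.image _).card = n - 2
  rw [Finset.card_image_of_injective _ (psi_fun_injective hn a), Finset.card_univ,
    Fintype.card_fin]

theorem psi_mem (hn : 3 ≤ n) (a : Fin (n-2) ↪ {x : Fin n // x ≠ 0}) : psi hn a ∈ Cn n := by
  constructor
  · intro s hs
    rw [show (psi hn a).1 = Finset.univ.image (fun i => barOf (BsetOf a i)
      (isGoodBlock_BsetOf hn a i)) from rfl, Finset.coe_image, Set.mem_image] at hs
    obtain ⟨i, -, rfl⟩ := hs
    exact barOf_mem_blockSet _ _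
  · exact psi_card hn a

theorem psi_injective (hn : 3 ≤ n) : Function.Injective (psi hn) := by
  intro a b h
  have hset : ∀ i, BsetOf a i = BsetOf b i := by
    intro i
    have hmem : barOf (BsetOf a i) (isGoodBlock_BsetOf hn a i) ∈ (psi hn b).1 := by
      rw [← h]
      exact Finset.mem_image_of_mem _ (Finset.mem_univ i)
    rw [show (psi hn b).1 = Finset.univ.image (fun i => barOf (BsetOf b i)
      (isGoodBlock_BsetOf hn b i)) from rfl, Finset.mem_image] at hmem
    obtain ⟨j, -, hj⟩ := hmem
    have hBB : BsetOf b j = BsetOf a i := by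
      have := congrArg blockOf hj
      rwa [blockOf_barOf, blockOf_barOf] at this
    have hij : j = i := by
      have := congrArg Finset.card hBB
      rw [card_BsetOf, card_BsetOf] at this
      exact Fin.ext (by omega)
    subst hij
    exact hBB.symm
  have him : ∀ i, (Finset.Iic i).image (fun j => (a j).1) =
      (Finset.Iic i).image (fun j => (b j).1) := by
    intro i
    have h1 := Finset.erase_insert (zero_not_mem_image a i)
    have h2 := Finset.erase_insert (zero_not_mem_image b i)
    rw [← h1, ← h2]
    show (BsetOf a i).erase 0 = (BsetOf b i).erase 0
    rw [hset i]
  have key : ∀ k (hk : k < n - 2), a ⟨k, hk⟩ = b ⟨k, hk⟩ := by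
    intro k
    induction k with
    | zero =>
      intro hk
      have hIic : Finset.Iic (⟨0, hk⟩ : Fin (n-2)) = {⟨0, hk⟩} := by
        ext j
        simp only [Finset.mem_Iic, Finset.mem_singleton, Fin.le_def, Fin.ext_iff]
        omega
      have := him ⟨0, hk⟩
      rw [hIic, Finset.image_singleton, Finset.image_singleton,
        Finset.singleton_inj] at this
      exact Subtype.ext this
    | succ k ih =>
      intro hk
      have hk' : k < n - 2 := Nat.lt_of_succ_lt hk
      have hIic : Finset.Iic (⟨k+1, hk⟩ : Fin (n-2)) =
          insert ⟨k+1, hk⟩ (Finset.Iic ⟨k, hk'⟩) := by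
        ext j
        simp only [Finset.mem_Iic, Finset.mem_insert, Fin.le_def, Fin.ext_iff]
        omega
      have hnotmem : ∀ (c : Fin (n-2) ↪ {x : Fin n // x ≠ 0}),
          (c ⟨k+1, hk⟩).1 ∉ (Finset.Iic (⟨k, hk'⟩ : Fin (n-2))).image (fun j => (c j).1) := by
        intro c hc
        rw [Finset.mem_image] at hc
        obtain ⟨j, hj, hj2⟩ := hc
        have := c.injective (Subtype.ext hj2.symm)
        rw [Finset.mem_Iic, ← this, Fin.mk_le_mk] at hj
        omega
      have heq := him ⟨k+1, hk⟩
      rw [hIic, Finset.image_insert, Finset.image_insert, him ⟨k, hk'⟩] at heq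
      have hmem : (a ⟨k+1, hk⟩).1 ∈ insert (b ⟨k+1, hk⟩).1
          ((Finset.Iic (⟨k, hk'⟩ : Fin (n-2))).image (fun j => (b j).1)) := by
        rw [← heq]
        exact Finset.mem_insert_self _ _
      rcases Finset.mem_insert.1 hmem with h' | h'
      · exact Subtype.ext h'
      · rw [← him ⟨k, hk'⟩] at h'
        exact absurd h' (hnotmem a)
  apply Function.Embedding.ext
  intro i
  have := key i.1 i.2
  simpa using this

theorem psi_surjective (hn : 3 ≤ n) {c : FacePoset n} (hc : c ∈ Cn n) :
    ∃ a, psi hn a = c := by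
  classical
  obtain ⟨hsub, hcard⟩ := hc
  have hsub' : ∀ s ∈ c.1, s ∈ blockSet n := fun s hs => hsub hs
  set D : Finset (Finset (Fin n)) := c.1.image blockOf with hD
  have hmemD : ∀ B ∈ D, ∃ s ∈ c.1, blockOf s = B := by
    intro B hB
    rw [hD, Finset.mem_image] at hB
    exact hB
  have hDcard : D.card = n - 2 := by
    rw [hD, Finset.card_image_of_injOn, hcard]
    intro s hs t ht h
    exact blockOf_injOn (hsub' s hs) (hsub' t ht) h
  have hchainD : ∀ B ∈ D, ∀ B' ∈ D, B ⊆ B' ∨ B' ⊆ B := by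
    intro B hB B' hB'
    obtain ⟨s, hs, rfl⟩ := hmemD B hB
    obtain ⟨t, ht, rfl⟩ := hmemD B' hB'
    by_cases hst : s = t
    · subst hst
      exact Or.inl (Finset.Subset.refl _)
    · rcases c.2.2 hs ht hst with h | h
      · exact Or.inl ((le_iff_blockOf (hsub' s hs) (hsub' t ht)).1 h)
      · exact Or.inr ((le_iff_blockOf (hsub' t ht) (hsub' s hs)).1 h)
  have hgood : ∀ B ∈ D, IsGoodBlock n B := by
    intro B hB
    obtain ⟨s, hs, rfl⟩ := hmemD B hB
    exact isGoodBlock_blockOf (hsub' s hs)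
  have hcard_inj : ∀ B ∈ D, ∀ B' ∈ D, B.card = B'.card → B = B' := by
    intro B hB B' hB' h
    rcases hchainD B hB B' hB' with hss | hss
    · exact Finset.eq_of_subset_of_card_le hss h.ge
    · exact (Finset.eq_of_subset_of_card_le hss h.le).symm
  have himcard : D.image Finset.card = Finset.Icc 2 (n-1) := by
    apply Finset.eq_of_subset_of_card_le
    · intro k hk
      rw [Finset.mem_image] at hk
      obtain ⟨B, hB, rfl⟩ := hk
      exact Finset.mem_Icc.2 ⟨(hgood B hB).2.1, (hgood B hB).2.2⟩
    · rw [Nat.card_Icc, Finset.card_image_of_injOn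
        (fun B hB B' hB' => hcard_inj B hB B' hB'), hDcard]
      omega
  have hex : ∀ i : Fin (n-2), ∃ B, B ∈ D ∧ B.card = i.1 + 2 := by
    intro i
    have hi : (i.1 + 2) ∈ Finset.Icc 2 (n-1) := by
      have := i.2
      exact Finset.mem_Icc.2 ⟨by omega, by omega⟩
    rw [← himcard, Finset.mem_image] at hi
    obtain ⟨B, hB, hBc⟩ := hi
    exact ⟨B, hB, hBc⟩
  choose F hFD hFcard using hex
  have hFmono : ∀ i j : Fin (n-2), i ≤ j → F i ⊆ F j := by
    intro i j hij
    rcases hchainD _ (hFD i) _ (hFD j) with h | h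
    · exact h
    · have hle := Finset.card_le_card h
      rw [hFcard, hFcard] at hle
      have : i = j := le_antisymm hij (by rw [Fin.le_def]; omega)
      rw [this]
  have h0F : ∀ i, (0 : Fin n) ∈ F i := fun i => (hgood _ (hFD i)).1
  set P : Fin (n-2) → Finset (Fin n) := fun i =>
    if h : i.1 = 0 then {0} else F ⟨i.1 - 1, Nat.lt_of_le_of_lt (Nat.sub_le _ _) i.2⟩
    with hP
  have hPsub : ∀ i, P i ⊆ F i := by
    intro i
    simp only [hP]
    by_cases h : i.1 = 0
    · rw [dif_pos h]
      intro y hy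
      rw [Finset.mem_singleton] at hy
      exact hy ▸ h0F i
    · rw [dif_neg h]
      exact hFmono _ _ (by rw [Fin.le_def]; exact Nat.sub_le _ _)
  have hPcard : ∀ i, (P i).card = i.1 + 1 := by
    intro i
    simp only [hP]
    by_cases h : i.1 = 0
    · rw [dif_pos h, Finset.card_singleton, h]
    · rw [dif_neg h, hFcard]
      show i.1 - 1 + 2 = i.1 + 1
      omega
  have h0P : ∀ i, (0 : Fin n) ∈ P i := by
    intro i
    simp only [hP]
    by_cases h : i.1 = 0
    · rw [dif_pos h]
      exact Finset.mem_singleton_self 0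
    · rw [dif_neg h]
      exact h0F _
  have hdiff : ∀ i, ∃ z : Fin n, F i \ P i = {z} := by
    intro i
    apply Finset.card_eq_one.1
    rw [Finset.card_sdiff_of_subset (hPsub i), hFcard, hPcard]
    omega
  choose x hx using hdiff
  have hxFP : ∀ i, x i ∈ F i ∧ x i ∉ P i := by
    intro i
    have : x i ∈ F i \ P i := by
      rw [hx i]
      exact Finset.mem_singleton_self _
    exact Finset.mem_sdiff.1 this
  have hxne : ∀ i, x i ≠ 0 := by
    intro i h
    exact (hxFP i).2 (h ▸ h0P i)
  have hFP : ∀ i j : Fin (n-2), i.1 < j.1 → F i ⊆ P j := by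
    intro i j hij
    simp only [hP]
    rw [dif_neg (by omega : ¬ j.1 = 0)]
    exact hFmono _ _ (by rw [Fin.le_def]; show i.1 ≤ j.1 - 1; omega)
  have hxlt : ∀ i j : Fin (n-2), i.1 < j.1 → x i ≠ x j := by
    intro i j hij h
    exact (hxFP j).2 (h ▸ hFP i j hij ((hxFP i).1))
  have hxinj : Function.Injective fun i => (⟨x i, hxne i⟩ : {z : Fin n // z ≠ 0}) := by
    intro i j h
    rw [Subtype.mk.injEq] at h
    rcases lt_trichotomy i.1 j.1 with hlt | heq | hlt
    · exact absurd h (hxlt i j hlt)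
    · exact Fin.ext heq
    · exact absurd h.symm (hxlt j i hlt)
  set a : Fin (n-2) ↪ {z : Fin n // z ≠ 0} := ⟨fun i => ⟨x i, hxne i⟩, hxinj⟩ with ha
  have hBF : ∀ k (hk : k < n - 2), BsetOf a ⟨k, hk⟩ = F ⟨k, hk⟩ := by
    intro k
    induction k with
    | zero =>
      intro hk
      have hIic : Finset.Iic (⟨0, hk⟩ : Fin (n-2)) = {⟨0, hk⟩} := by
        ext j
        simp only [Finset.mem_Iic, Finset.mem_singleton, Fin.le_def, Fin.ext_iff]
        omega
      rw [BsetOf, hIic, Finset.image_singleton]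
      apply Finset.eq_of_subset_of_card_le
      · intro y hy
        rcases Finset.mem_insert.1 hy with rfl | hy
        · exact h0F _
        · rw [Finset.mem_singleton] at hy
          rw [hy]
          exact (hxFP _).1
      · rw [hFcard, Finset.card_insert_of_notMem (by
          rw [Finset.mem_singleton]
          exact fun h => (hxne _) h.symm), Finset.card_singleton]
    | succ k ih =>
      intro hk
      have hk' : k < n - 2 := Nat.lt_of_succ_lt hk
      have hIic : Finset.Iic (⟨k+1, hk⟩ : Fin (n-2)) =
          insert ⟨k+1, hk⟩ (Finset.Iic ⟨k, hk'⟩) := by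
        ext j
        simp only [Finset.mem_Iic, Finset.mem_insert, Fin.le_def, Fin.ext_iff]
        omega
      have hstep : BsetOf a ⟨k+1, hk⟩ = insert (x ⟨k+1, hk⟩) (BsetOf a ⟨k, hk'⟩) := by
        rw [BsetOf, BsetOf, hIic, Finset.image_insert, Finset.insert_comm]
        rfl
      have hFeqP : F ⟨k, hk'⟩ = P ⟨k+1, hk⟩ := by
        simp only [hP]
        rw [dif_neg (Nat.succ_ne_zero k : ¬ ((⟨k+1, hk⟩ : Fin (n-2)) : ℕ) = 0)]
        exact congrArg F (Fin.ext (by show (k:ℕ) = k + 1 - 1; omega))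
      rw [hstep, ih hk']
      apply Finset.eq_of_subset_of_card_le
      · apply Finset.insert_subset (hxFP _).1
        exact hFmono _ _ (by rw [Fin.le_def]; show k ≤ k + 1; omega)
      · rw [hFcard, Finset.card_insert_of_notMem (by
          rw [hFeqP]
          exact (hxFP _).2), hFcard]
  refine ⟨a, ?_⟩
  apply Subtype.ext
  apply Finset.eq_of_subset_of_card_le
  · intro s hs
    rw [show (psi hn a).1 = Finset.univ.image (fun i => barOf (BsetOf a i)
      (isGoodBlock_BsetOf hn a i)) from rfl, Finset.mem_image] at hs
    obtain ⟨i, -, rfl⟩ := hs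
    obtain ⟨t, ht, hbt⟩ := hmemD (F i) (hFD i)
    have hBi : BsetOf a i = F i := by
      have := hBF i.1 i.2
      simpa using this
    have : barOf (BsetOf a i) (isGoodBlock_BsetOf hn a i) = t := by
      apply blockOf_injOn (barOf_mem_blockSet _ _) (hsub' t ht)
      rw [blockOf_barOf, hBi, hbt]
    rw [this]
    exact ht
  · rw [hcard, psi_card hn a]

theorem descFactorial_aux (m : ℕ) : (m+2).descFactorial (m+1) = (m+2).factorial := by
  have h := Nat.descFactorial_succ (m+2) (m+1)
  have h2 : m + 1 + 1 = m + 2 := rfl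
  rw [h2, Nat.descFactorial_self] at h
  have h3 : m + 2 - (m + 1) = 1 := by omega
  rw [h3, one_mul] at h
  exact h.symm

end CardCnAux

/-- For every `n ≥ 3`, the cardinality of `C_n` — the set of chains of cardinality `n - 2`
in `Π̄_n` all of whose members are partitions in which every block not containing the
distinguished element is a singleton — is `(n-1)!`. -/
theorem card_Cn (n : ℕ) [NeZero n] (hn : 3 ≤ n) :
    (Cn n).ncard = Nat.factorial (n - 1) := by
  classical
  have hbij : Function.Bijective (fun a : Fin (n-2) ↪ {x : Fin n // x ≠ 0} =>
      (⟨psi hn a, psi_mem hn a⟩ : Cn n)) := by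
    constructor
    · intro a b h
      exact psi_injective hn (congrArg Subtype.val h)
    · rintro ⟨c, hc⟩
      obtain ⟨a, ha⟩ := psi_surjective hn hc
      exact ⟨a, Subtype.ext ha⟩
  have hcardeq := Nat.card_eq_of_bijective _ hbij
  have hsub : Fintype.card {x : Fin n // x ≠ 0} = n - 1 := by
    simp [Fintype.card_subtype_compl]
  rw [← Nat.card_coe_set_eq, ← hcardeq, Nat.card_eq_fintype_card,
    Fintype.card_embedding_eq, Fintype.card_fin, hsub]
  obtain ⟨m, rfl⟩ : ∃ m, n = m + 3 := ⟨n - 3, by omega⟩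
  have e1 : m + 3 - 1 = m + 2 := by omega
  have e2 : m + 3 - 2 = m + 1 := by omega
  rw [e1, e2, descFactorial_aux]
end
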